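/- arXiv:1709.03424 — 2 statements merged into one kernel-verified Lean document; each statement's English description precedes it below -/
import Mathlib

section
/- Let m, n, w, d be natural numbers with 1 ≤ w and w ∣ m. Then (Nat.choose m w)^n · B(m·n, n·w, d) ≤ (Nat.choose (m·n) (n·w)) · A(m, n, w, d), and (m/w)^(n·w) · A(m, n, w, d) ≤ (Nat.choose m w)^n · C(m/w, n·w, d). -/
open Finset

/-- Total Hamming distance between two words in `J(m,w)^n`:
the number of positions (among all `m·n` entries) in which they differ. -/
def arrDist {m n : ℕ} (X Y : Fin n → Fin m → ZMod 2) : ℕ :=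
  ∑ k, hammingDist (X k) (Y k)

/-- `C` is a constant-weight array code in `J(m,w)^n` with minimum distance `2d`. -/
def isCWAC (m n w d : ℕ) (C : Finset (Fin n → Fin m → ZMod 2)) : Prop :=
  C.Nonempty ∧ (∀ X ∈ C, ∀ k, hammingNorm (X k) = w) ∧
    ∀ X ∈ C, ∀ Y ∈ C, X ≠ Y → 2 * d ≤ arrDist X Y

/-- Maximum cardinality of a CWAC in `J(m,w)^n` with minimum Hamming distance `2d`. -/
noncomputable def Amax (m n w d : ℕ) : ℕ :=
  sSup { c | ∃ C : Finset (Fin n → Fin m → ZMod 2), isCWAC m n w d C ∧ C.card = c }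

/-- Maximum cardinality of an anticode in `J(m,w)^n` with diameter `2δ`. -/
noncomputable def alphaMax (m n w δ : ℕ) : ℕ :=
  sSup { c | ∃ C : Finset (Fin n → Fin m → ZMod 2), C.Nonempty ∧
    (∀ X ∈ C, ∀ k, hammingNorm (X k) = w) ∧
    (∀ X ∈ C, ∀ Y ∈ C, arrDist X Y ≤ 2 * δ) ∧ C.card = c }

/-- Maximum cardinality of a binary constant-weight code in `J(n,w)` with
minimum Hamming distance `2d`. -/
noncomputable def Bmax (n w d : ℕ) : ℕ :=
  sSup { c | ∃ C : Finset (Fin n → ZMod 2), C.Nonempty ∧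
    (∀ x ∈ C, hammingNorm x = w) ∧
    (∀ x ∈ C, ∀ y ∈ C, x ≠ y → 2 * d ≤ hammingDist x y) ∧ C.card = c }

/-- Maximum cardinality of a nonrestricted `q`-ary code of length `n` with
minimum Hamming distance `d`. -/
noncomputable def Cmax (q n d : ℕ) : ℕ :=
  sSup { c | ∃ C : Finset (Fin n → Fin q), C.Nonempty ∧
    (∀ x ∈ C, ∀ y ∈ C, x ≠ y → d ≤ hammingDist x y) ∧ C.card = c }

/-- `ν(i)`: the number of vectors of weight `u` at Hamming distance `i` from a
fixed vector of weight `w` in `GF(2)^m`. -/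
def nuF (m w u : ℕ) (i : ℕ) : ℕ :=
  if (u + w - i) % 2 = 0 ∧ i ≤ u + w ∧ w ≤ u + i then
    Nat.choose w ((u + w - i) / 2) * Nat.choose (m - w) ((u + i - w) / 2)
  else 0

section Helpers
variable {α β : Type*} [Fintype α] [DecidableEq α] [Fintype β] [DecidableEq β]

lemma hammingDist_comp_equiv {γ : Type*} [DecidableEq γ] (e : β ≃ α) (x y : α → γ) :
    hammingDist (x ∘ e) (y ∘ e) = hammingDist x y := by
  unfold hammingDist
  apply Finset.card_bij (fun b _ => e b)
  · intro b hb; simp only [mem_filter, mem_univ, true_and] at *; exact hb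
  · intro b _ b' _ h; exact e.injective h
  · intro a ha
    refine ⟨e.symm a, ?_, by simp⟩
    simp only [mem_filter, mem_univ, true_and, Function.comp] at *
    simpa using ha

lemma hammingNorm_comp_equiv {γ : Type*} [DecidableEq γ] [Zero γ] (e : β ≃ α) (x : α → γ) :
    hammingNorm (x ∘ e) = hammingNorm x := by
  rw [← hammingDist_zero_right, ← hammingDist_zero_right x]
  exact hammingDist_comp_equiv e x 0

lemma exists_perm_mem_iff (s t : Finset α) (h : s.card = t.card) :
    ∃ σ : Equiv.Perm α, ∀ a, a ∈ s ↔ σ a ∈ t := by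
  have h' : (sᶜ).card = (tᶜ).card := by
    rw [Finset.card_compl, Finset.card_compl, h]
  let e1 : {a // a ∈ s} ≃ {a // a ∈ t} := s.equivOfCardEq h
  let e2' : {a // a ∈ sᶜ} ≃ {a // a ∈ tᶜ} := sᶜ.equivOfCardEq h'
  let e2 : {a // ¬ a ∈ s} ≃ {a // ¬ a ∈ t} :=
    ((Equiv.subtypeEquivRight (fun a => (Finset.mem_compl).symm)).trans e2').trans
      (Equiv.subtypeEquivRight (fun a => Finset.mem_compl))
  refine ⟨((Equiv.sumCompl (· ∈ s)).symm.trans ((e1.sumCongr e2).trans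
    (Equiv.sumCompl (· ∈ t)))), fun a => ?_⟩
  by_cases ha : a ∈ s
  · simp only [Equiv.trans_apply, Equiv.sumCompl_symm_apply_of_pos ha,
      Equiv.sumCongr_apply, Sum.map_inl, Equiv.sumCompl_apply_inl]
    exact ⟨fun _ => (e1 ⟨a, ha⟩).2, fun _ => ha⟩
  · simp only [Equiv.trans_apply, Equiv.sumCompl_symm_apply_of_neg ha,
      Equiv.sumCongr_apply, Sum.map_inr, Equiv.sumCompl_apply_inr]
    exact ⟨fun h' => absurd h' ha, fun h' => absurd h' (e2 ⟨a, ha⟩).2⟩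

lemma zmod2_eq_one {v : ZMod 2} (h : v ≠ 0) : v = 1 := by revert v; decide

lemma exists_perm_comp (x y : α → ZMod 2) (h : hammingNorm x = hammingNorm y) :
    ∃ σ : Equiv.Perm α, x ∘ σ = y := by
  obtain ⟨σ, hσ⟩ := exists_perm_mem_iff ({a | y a ≠ 0} : Finset α) ({a | x a ≠ 0} : Finset α)
    (by unfold hammingNorm at h; rw [h])
  refine ⟨σ, funext fun a => ?_⟩
  by_cases ha : y a ≠ 0
  · have : σ a ∈ ({a | x a ≠ 0} : Finset α) := (hσ a).1 (by simpa using ha)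
    simp only [mem_filter, mem_univ, true_and] at this
    rw [Function.comp_apply, zmod2_eq_one this, zmod2_eq_one ha]
  · push_neg at ha
    have : ¬ σ a ∈ ({a | x a ≠ 0} : Finset α) := fun hc => by
      have := (hσ a).2 hc; simp [ha] at this
    simp only [mem_filter, mem_univ, true_and, not_not] at this
    rw [Function.comp_apply, this, ha]

end Helpers

section Helpers2
variable {α : Type*} [Fintype α] [DecidableEq α]


lemma transporter_card_eq (x0 x y : α → ZMod 2) (hx : hammingNorm x = hammingNorm x0)
    (hy : hammingNorm y = hammingNorm x0) :
    (univ.filter fun σ : Equiv.Perm α => x ∘ ⇑σ = y).card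
      = (univ.filter fun σ : Equiv.Perm α => x0 ∘ ⇑σ = x0).card := by
  obtain ⟨τ, hτ⟩ := exists_perm_comp x0 x hx.symm
  obtain ⟨τ', hτ'⟩ := exists_perm_comp x0 y hy.symm
  apply Finset.card_bij' (fun σ _ => τ * σ * τ'⁻¹) (fun ρ _ => τ⁻¹ * ρ * τ')
  · intro σ hσ
    simp only [mem_filter, mem_univ, true_and] at *
    funext a
    simp only [Function.comp_apply, Equiv.Perm.mul_apply]
    rw [show x0 (τ (σ (τ'⁻¹ a))) = x (σ (τ'⁻¹ a)) from congrFun hτ _,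
      show x (σ (τ'⁻¹ a)) = y (τ'⁻¹ a) from congrFun hσ _,
      show y (τ'⁻¹ a) = x0 (τ' (τ'⁻¹ a)) from (congrFun hτ' _).symm]
    simp
  · intro ρ hρ
    simp only [mem_filter, mem_univ, true_and] at *
    funext a
    simp only [Function.comp_apply, Equiv.Perm.mul_apply]
    rw [show x (τ⁻¹ (ρ (τ' a))) = x0 (τ (τ⁻¹ (ρ (τ' a)))) from (congrFun hτ _).symm]
    rw [← Equiv.Perm.mul_apply τ τ⁻¹, mul_inv_cancel, Equiv.Perm.one_apply]
    rw [show x0 (ρ (τ' a)) = x0 (τ' a) from congrFun hρ _,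
      show x0 (τ' a) = y a from congrFun hτ' _]
  · intro σ _; group
  · intro ρ _; group

lemma card_weight_filter (t : ℕ) :
    ((univ : Finset (α → ZMod 2)).filter fun y => hammingNorm y = t).card
      = Nat.choose (Fintype.card α) t := by
  rw [← Finset.card_univ, ← Finset.card_powersetCard]
  apply Finset.card_bij (fun y _ => ({a | y a ≠ 0} : Finset α))
  · intro y hy
    simp only [mem_filter, mem_univ, true_and] at hy
    rw [Finset.mem_powersetCard]
    exact ⟨subset_univ _, hy⟩
  · intro y _ y' _ h
    funext a
    have hmem := Finset.ext_iff.mp h a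
    simp only [mem_filter, mem_univ, true_and] at hmem
    by_cases ha : y a = 0
    · have : y' a = 0 := by
        by_contra hc
        exact (ha ▸ hmem.2 hc) rfl
      rw [ha, this]
    · rw [zmod2_eq_one ha, zmod2_eq_one (fun hc => (hmem.1 ha) hc)]
  · intro s hs
    rw [Finset.mem_powersetCard] at hs
    refine ⟨fun a => if a ∈ s then (1 : ZMod 2) else 0, ?_, ?_⟩
    · simp only [mem_filter, mem_univ, true_and]
      have hset : ∀ a : α, ((if a ∈ s then (1 : ZMod 2) else 0) ≠ 0) ↔ a ∈ s := by
        intro a; by_cases ha : a ∈ s <;> simp [ha]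
      simp only [hammingNorm, ne_eq, not_not]
      simp only [hset]
      simpa using hs.2
    · ext a
      by_cases ha : a ∈ s <;> simp [ha]

lemma card_perm_eq (x0 : α → ZMod 2) :
    Fintype.card (Equiv.Perm α)
      = (univ.filter fun σ : Equiv.Perm α => x0 ∘ ⇑σ = x0).card
        * Nat.choose (Fintype.card α) (hammingNorm x0) := by
  classical
  have hnorm : ∀ σ : Equiv.Perm α, hammingNorm (x0 ∘ ⇑σ) = hammingNorm x0 := by
    intro σ
    rw [← hammingDist_zero_right, ← hammingDist_zero_right x0]
    exact hammingDist_comp_equiv σ x0 0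
  rw [← card_weight_filter (α := α) (hammingNorm x0), ← Finset.card_univ (α := Equiv.Perm α)]
  rw [Finset.card_eq_sum_card_fiberwise (f := fun σ : Equiv.Perm α => x0 ∘ ⇑σ)
      (t := (univ.filter fun y => hammingNorm y = hammingNorm x0))
      (fun σ _ => by simp [hnorm])]
  rw [Finset.sum_congr rfl (fun y hy => transporter_card_eq x0 x0 y rfl
    (by simpa using hy))]
  rw [Finset.sum_const, smul_eq_mul, mul_comm]

end Helpers2

lemma hammingDist_prod_sum' {κ γ β : Type*} [Fintype κ] [Fintype γ] [DecidableEq β]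
    (x y : κ × γ → β) :
    hammingDist x y = ∑ k, hammingDist (fun j => x (k, j)) (fun j => y (k, j)) := by
  simp only [hammingDist, Finset.card_filter]
  rw [Fintype.sum_prod_type]

lemma hammingNorm_prod_sum' {κ γ β : Type*} [Fintype κ] [Fintype γ] [DecidableEq β] [Zero β]
    (x : κ × γ → β) :
    hammingNorm x = ∑ k, hammingNorm (fun j => x (k, j)) := by
  rw [← hammingDist_zero_right, hammingDist_prod_sum']
  exact Finset.sum_congr rfl (fun k _ => hammingDist_zero_right _)

lemma hammingNorm_ind {α : Type*} [Fintype α] [DecidableEq α] (a : α) :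
    hammingNorm (fun j => if j = a then (1 : ZMod 2) else 0) = 1 := by
  simp [hammingNorm, Finset.filter_eq']

lemma hammingDist_ind {α : Type*} [Fintype α] [DecidableEq α] (a a' : α) :
    hammingDist (fun j => if j = a then (1 : ZMod 2) else 0)
      (fun j => if j = a' then (1 : ZMod 2) else 0) = if a = a' then 0 else 2 := by
  rcases eq_or_ne a a' with rfl | h
  · simp
  · rw [if_neg h]
    unfold hammingDist
    rw [show ({j | (if j = a then (1 : ZMod 2) else 0) ≠ if j = a' then (1 : ZMod 2) else 0} :
        Finset α) = {a, a'} from ?_]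
    · exact Finset.card_pair h
    · ext j
      simp only [Finset.mem_filter, Finset.mem_univ, true_and, Finset.mem_insert,
        Finset.mem_singleton, ne_eq]
      constructor
      · intro hmem
        by_contra hc
        push_neg at hc
        simp [hc.1, hc.2] at hmem
      · intro hmem hEq
        rcases hmem with rfl | rfl
        · rw [if_pos rfl, if_neg h] at hEq
          exact one_ne_zero hEq
        · rw [if_neg (Ne.symm h), if_pos rfl] at hEq
          exact zero_ne_one hEq

lemma cmax_bddAbove (q n d : ℕ) : BddAbove
    { c | ∃ C : Finset (Fin n → Fin q), C.Nonempty ∧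
      (∀ x ∈ C, ∀ y ∈ C, x ≠ y → d ≤ hammingDist x y) ∧ C.card = c } := by
  refine ⟨Fintype.card (Fin n → Fin q), fun c hc => ?_⟩
  obtain ⟨C, _, _, hcard⟩ := hc
  exact hcard ▸ Finset.card_le_univ C

lemma amax_bddAbove (m n w d : ℕ) : BddAbove
    { c | ∃ C : Finset (Fin n → Fin m → ZMod 2), isCWAC m n w d C ∧ C.card = c } := by
  refine ⟨Fintype.card (Fin n → Fin m → ZMod 2), fun c hc => ?_⟩
  obtain ⟨C, _, hcard⟩ := hc
  exact hcard ▸ Finset.card_le_univ C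

lemma ineq1 (m n w d : ℕ) :
    (Nat.choose m w) ^ n * Bmax (m * n) (n * w) d
        ≤ Nat.choose (m * n) (n * w) * Amax m n w d := by
  classical
  by_cases hne : { c | ∃ C : Finset (Fin (m * n) → ZMod 2), C.Nonempty ∧
      (∀ x ∈ C, hammingNorm x = n * w) ∧
      (∀ x ∈ C, ∀ y ∈ C, x ≠ y → 2 * d ≤ hammingDist x y) ∧ C.card = c }.Nonempty
  swap
  · rw [Bmax, Set.not_nonempty_iff_eq_empty.mp hne, csSup_empty]
    simp
  have hmem := Nat.sSup_mem hne ⟨Fintype.card (Fin (m * n) → ZMod 2), fun c hc => by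
    obtain ⟨C, _, _, _, hcard⟩ := hc; exact hcard ▸ Finset.card_le_univ C⟩
  obtain ⟨B0, hB0ne, hB0w, hB0d, hB0card⟩ := hmem
  -- transport to product index space
  set ι : Fin n × Fin m ≃ Fin (m * n) :=
    (finProdFinEquiv (m := n) (n := m)).trans (finCongr (Nat.mul_comm n m)) with hι
  have hcomp_inj : Function.Injective (fun x : Fin (m * n) → ZMod 2 => x ∘ ⇑ι) := by
    intro a b h
    funext i
    have := congrFun h (ι.symm i)
    simpa using this
  set B : Finset (Fin n × Fin m → ZMod 2) := B0.image (fun x => x ∘ ⇑ι) with hB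
  have hBcard : B.card = Bmax (m * n) (n * w) d := by
    rw [hB, Finset.card_image_of_injective _ hcomp_inj, hB0card]
    rfl
  have hBw : ∀ x ∈ B, hammingNorm x = n * w := by
    intro x hx
    obtain ⟨x0, hx0, rfl⟩ := Finset.mem_image.mp hx
    rw [hammingNorm_comp_equiv ι x0]
    exact hB0w x0 hx0
  have hBd : ∀ x ∈ B, ∀ y ∈ B, x ≠ y → 2 * d ≤ hammingDist x y := by
    intro x hx y hy hxy
    obtain ⟨x0, hx0, rfl⟩ := Finset.mem_image.mp hx
    obtain ⟨y0, hy0, rfl⟩ := Finset.mem_image.mp hy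
    rw [hammingDist_comp_equiv ι x0 y0]
    exact hB0d x0 hx0 y0 hy0 (fun hc => hxy (hc ▸ rfl))
  set D : Finset (Fin n × Fin m → ZMod 2) :=
    univ.filter (fun x => ∀ k, hammingNorm (fun j => x (k, j)) = w) with hD
  have hDcard : D.card = (Nat.choose m w) ^ n := by
    have : D.card = (Fintype.piFinset (fun _ : Fin n =>
        (univ.filter fun v : Fin m → ZMod 2 => hammingNorm v = w))).card := by
      apply Finset.card_bij (fun x _ => fun k => fun j => x (k, j))
      · intro x hx
        rw [Fintype.mem_piFinset]
        intro k
        simp only [mem_filter, mem_univ, true_and]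
        exact (Finset.mem_filter.mp hx).2 k
      · intro x _ x' _ h
        funext p
        exact congrFun (congrFun h p.1) p.2
      · intro f hf
        refine ⟨fun p => f p.1 p.2, ?_, rfl⟩
        rw [hD, Finset.mem_filter]
        refine ⟨mem_univ _, fun k => ?_⟩
        have := Fintype.mem_piFinset.mp hf k
        simpa using this
    rw [this, Fintype.card_piFinset]
    simp [card_weight_filter]
  have hDw : ∀ y ∈ D, hammingNorm y = n * w := by
    intro y hy
    rw [hammingNorm_prod_sum']
    rw [Finset.sum_congr rfl (fun k _ => (Finset.mem_filter.mp hy).2 k)]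
    simp [mul_comm]
  obtain ⟨b0, hb0⟩ := hB0ne
  set bb0 : Fin n × Fin m → ZMod 2 := b0 ∘ ⇑ι with hbb0
  have hbb0B : bb0 ∈ B := Finset.mem_image_of_mem _ hb0
  have hbb0w : hammingNorm bb0 = n * w := hBw _ hbb0B
  set c : ℕ := (univ.filter fun σ : Equiv.Perm (Fin n × Fin m) => bb0 ∘ ⇑σ = bb0).card with hc
  have hcpos : 0 < c := by
    rw [hc]
    refine Finset.card_pos.mpr ⟨1, ?_⟩
    simp
  -- the double counting sum
  set S : ℕ := ∑ σ : Equiv.Perm (Fin n × Fin m),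
      ((B ×ˢ D).filter fun p => p.1 ∘ ⇑σ = p.2).card with hS
  have hS1 : S = c * (Bmax (m * n) (n * w) d * (Nat.choose m w) ^ n) := by
    rw [hS]
    simp only [Finset.card_filter]
    rw [Finset.sum_comm]
    have : ∀ p ∈ B ×ˢ D, (∑ σ : Equiv.Perm (Fin n × Fin m),
        if p.1 ∘ ⇑σ = p.2 then 1 else 0) = c := by
      intro p hp
      rw [← Finset.card_filter]
      rw [hc]
      exact transporter_card_eq bb0 p.1 p.2
        ((hBw _ (Finset.mem_product.mp hp).1).trans hbb0w.symm)
        ((hDw _ (Finset.mem_product.mp hp).2).trans hbb0w.symm)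
    rw [Finset.sum_congr rfl this, Finset.sum_const, smul_eq_mul,
      Finset.card_product, hBcard, hDcard]
    ring
  have hterm : ∀ σ : Equiv.Perm (Fin n × Fin m),
      ((B ×ˢ D).filter fun p => p.1 ∘ ⇑σ = p.2).card ≤ Amax m n w d := by
    intro σ
    set F := (B ×ˢ D).filter (fun p => p.1 ∘ ⇑σ = p.2) with hF
    rcases Finset.eq_empty_or_nonempty F with hFe | hFne
    · rw [hFe]; simp
    · set Cσ := F.image (fun p => fun k => fun j => p.2 (k, j)) with hCσ
      have hinj : Set.InjOn (fun p : ((Fin n × Fin m → ZMod 2) × (Fin n × Fin m → ZMod 2)) =>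
          fun k => fun j => p.2 (k, j)) F := by
        intro p hp q hq h
        have h2 : p.2 = q.2 := by
          funext pr
          exact congrFun (congrFun h pr.1) pr.2
        have hp' := (Finset.mem_filter.mp hp).2
        have hq' := (Finset.mem_filter.mp hq).2
        have h1 : p.1 = q.1 := by
          have hcc : p.1 ∘ ⇑σ = q.1 ∘ ⇑σ := by rw [hp', hq', h2]
          funext a
          have := congrFun hcc (σ.symm a)
          simpa using this
        exact Prod.ext h1 h2
      have hcard : F.card = Cσ.card := (Finset.card_image_of_injOn hinj).symm
      rw [hcard]
      apply le_csSup (amax_bddAbove m n w d)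
      refine ⟨Cσ, ⟨?_, ?_, ?_⟩, rfl⟩
      · exact hFne.image _
      · intro X hX k
        obtain ⟨p, hp, rfl⟩ := Finset.mem_image.mp hX
        have hpD := (Finset.mem_product.mp (Finset.mem_filter.mp hp).1).2
        exact (Finset.mem_filter.mp hpD).2 k
      · intro X hX Y hY hXY
        obtain ⟨p, hp, rfl⟩ := Finset.mem_image.mp hX
        obtain ⟨q, hq, rfl⟩ := Finset.mem_image.mp hY
        have hp' := (Finset.mem_filter.mp hp).2
        have hq' := (Finset.mem_filter.mp hq).2
        have hpB := (Finset.mem_product.mp (Finset.mem_filter.mp hp).1).1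
        have hqB := (Finset.mem_product.mp (Finset.mem_filter.mp hq).1).1
        have hne1 : p.1 ≠ q.1 := by
          intro hcc
          apply hXY
          have h22 : p.2 = q.2 := by rw [← hp', ← hq', hcc]
          rw [h22]
        have harr : arrDist (fun k j => p.2 (k, j)) (fun k j => q.2 (k, j))
            = hammingDist p.2 q.2 := (hammingDist_prod_sum' p.2 q.2).symm
        rw [harr, ← hp', ← hq',
          hammingDist_comp_equiv (σ : Fin n × Fin m ≃ Fin n × Fin m) p.1 q.1]
        exact hBd p.1 hpB q.1 hqB hne1
  have hS2 : S ≤ Fintype.card (Equiv.Perm (Fin n × Fin m)) * Amax m n w d := by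
    rw [hS, ← Finset.card_univ]
    calc ∑ σ : Equiv.Perm (Fin n × Fin m), ((B ×ˢ D).filter fun p => p.1 ∘ ⇑σ = p.2).card
        ≤ ∑ _σ : Equiv.Perm (Fin n × Fin m), Amax m n w d :=
          Finset.sum_le_sum (fun σ _ => hterm σ)
      _ = _ := by rw [Finset.sum_const, smul_eq_mul]
  have hcper : Fintype.card (Equiv.Perm (Fin n × Fin m))
      = c * Nat.choose (m * n) (n * w) := by
    rw [card_perm_eq bb0, hbb0w, ← hc]
    congr 2
    simp [mul_comm]
  rw [hcper] at hS2
  rw [hS1] at hS2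
  have key : c * (Bmax (m * n) (n * w) d * Nat.choose m w ^ n)
      ≤ c * (Nat.choose (m * n) (n * w) * Amax m n w d) := by
    calc c * (Bmax (m * n) (n * w) d * Nat.choose m w ^ n)
        ≤ c * Nat.choose (m * n) (n * w) * Amax m n w d := hS2
      _ = c * (Nat.choose (m * n) (n * w) * Amax m n w d) := by ring
  have := Nat.le_of_mul_le_mul_left key hcpos
  calc Nat.choose m w ^ n * Bmax (m * n) (n * w) d
      = Bmax (m * n) (n * w) d * Nat.choose m w ^ n := by ring
    _ ≤ Nat.choose (m * n) (n * w) * Amax m n w d := this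

lemma ineq2 (m n w d : ℕ) (hw : 1 ≤ w) (hwm : w ∣ m) :
    (m / w) ^ (n * w) * Amax m n w d ≤ (Nat.choose m w) ^ n * Cmax (m / w) (n * w) d := by
  classical
  set q := m / w with hq
  by_cases hne : { c | ∃ C : Finset (Fin n → Fin m → ZMod 2), isCWAC m n w d C ∧
      C.card = c }.Nonempty
  swap
  · rw [Amax, Set.not_nonempty_iff_eq_empty.mp hne, csSup_empty]
    simp
  have hmem := Nat.sSup_mem hne (amax_bddAbove m n w d)
  obtain ⟨C, ⟨hCne, hCw, hCd⟩, hCcard⟩ := hmem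
  rcases Nat.eq_zero_or_pos n with rfl | hn
  · -- n = 0 : both sides are about trivial spaces
    have hCcard' : C.card = Amax m 0 w d := hCcard
    have hC1 : Amax m 0 w d ≤ 1 := by
      rw [← hCcard']
      calc C.card ≤ Fintype.card (Fin 0 → Fin m → ZMod 2) := Finset.card_le_univ C
        _ = 1 := by simp
    have hCmax1 : 1 ≤ Cmax q (0 * w) d := by
      apply le_csSup (cmax_bddAbove q (0 * w) d)
      refine ⟨{fun i => (Fin.cast (by omega) i).elim0}, Finset.singleton_nonempty _, ?_,
        Finset.card_singleton _⟩
      intro x hx y hy hxy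
      rw [Finset.mem_singleton] at hx hy
      exact absurd (hx.trans hy.symm) hxy
    calc q ^ (0 * w) * Amax m 0 w d = Amax m 0 w d := by simp
      _ ≤ 1 := hC1
      _ ≤ Cmax q (0 * w) d := hCmax1
      _ ≤ (Nat.choose m w) ^ 0 * Cmax q (0 * w) d := by simp
  -- main case : n ≥ 1
  obtain ⟨X0, hX0⟩ := hCne
  set k0 : Fin n := ⟨0, hn⟩ with hk0
  set u0 : Fin m → ZMod 2 := X0 k0 with hu0
  have hu0w : hammingNorm u0 = w := hCw X0 hX0 k0
  have hwm' : w ≤ m := hu0w ▸ (hammingNorm_le_card_fintype).trans_eq (Fintype.card_fin m)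
  have hmqw : w * q = m := Nat.mul_div_cancel' hwm
  set e : Fin w × Fin q ≃ Fin m := finProdFinEquiv.trans (finCongr hmqw) with he
  set emb : (Fin n → Fin w → Fin q) → (Fin n → Fin m → ZMod 2) :=
    fun f k j => if (e.symm j).2 = f k (e.symm j).1 then 1 else 0 with hemb
  have hrow : ∀ (f : Fin n → Fin w → Fin q) (k : Fin n),
      (emb f k) ∘ ⇑e = fun bq : Fin w × Fin q =>
        if bq.2 = f k bq.1 then (1 : ZMod 2) else 0 := by
    intro f k
    funext bq
    simp [hemb]
  have hrow2 : ∀ (f : Fin n → Fin w → Fin q) (k : Fin n) (b : Fin w),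
      (fun j => ((emb f k) ∘ ⇑e) (b, j)) = fun j : Fin q =>
        if j = f k b then (1 : ZMod 2) else 0 := by
    intro f k b
    rw [hrow]
  have hembw : ∀ (f : Fin n → Fin w → Fin q) (k : Fin n), hammingNorm (emb f k) = w := by
    intro f k
    rw [← hammingNorm_comp_equiv e (emb f k), hammingNorm_prod_sum']
    rw [Finset.sum_congr rfl (fun b _ => by rw [hrow2 f k b, hammingNorm_ind])]
    simp
  have hembd : ∀ (f g : Fin n → Fin w → Fin q) (k : Fin n),
      hammingDist (emb f k) (emb g k) = 2 * hammingDist (f k) (g k) := by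
    intro f g k
    rw [← hammingDist_comp_equiv e (emb f k) (emb g k), hammingDist_prod_sum']
    rw [Finset.sum_congr rfl (fun b _ => by rw [hrow2 f k b, hrow2 g k b, hammingDist_ind])]
    rw [hammingDist, Finset.card_filter, Finset.mul_sum]
    apply Finset.sum_congr rfl
    intro b _
    by_cases hb : f k b = g k b
    · simp [hb]
    · simp [hb, Ne.symm]
  have hembinj : Function.Injective emb := by
    intro f g hfg
    funext k b
    by_contra hc
    have h2 := congrFun (congrFun hfg k) (e (b, f k b))
    simp only [hemb, Equiv.symm_apply_apply] at h2
    simp [hc] at h2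
  set c0 : ℕ := (univ.filter fun π : Equiv.Perm (Fin m) => u0 ∘ ⇑π = u0).card with hc0
  have hc0pos : 0 < c0 := by
    rw [hc0]
    refine Finset.card_pos.mpr ⟨1, ?_⟩
    simp
  have htrans : ∀ (p : (Fin n → Fin m → ZMod 2) × (Fin n → Fin w → Fin q)), p.1 ∈ C →
      (univ.filter fun g : Fin n → Equiv.Perm (Fin m) =>
        (fun k => p.1 k ∘ ⇑(g k)) = emb p.2).card = c0 ^ n := by
    intro p hp
    have hfil : (univ.filter fun g : Fin n → Equiv.Perm (Fin m) =>
        (fun k => p.1 k ∘ ⇑(g k)) = emb p.2)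
        = Fintype.piFinset (fun k => univ.filter fun π : Equiv.Perm (Fin m) =>
            p.1 k ∘ ⇑π = emb p.2 k) := by
      ext g
      simp only [Finset.mem_filter, Finset.mem_univ, true_and, Fintype.mem_piFinset,
        funext_iff]
    rw [hfil, Fintype.card_piFinset]
    rw [Finset.prod_congr rfl (fun k _ => transporter_card_eq u0 (p.1 k) (emb p.2 k)
      (by rw [hCw p.1 hp k, hu0w]) (by rw [hembw p.2 k, hu0w]))]
    rw [Finset.prod_const, ← hc0]
    simp
  set S : ℕ := ∑ g : Fin n → Equiv.Perm (Fin m),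
      ((C ×ˢ (univ : Finset (Fin n → Fin w → Fin q))).filter
        fun p => (fun k => p.1 k ∘ ⇑(g k)) = emb p.2).card with hS
  have hCcard' : C.card = Amax m n w d := hCcard
  have hS1 : S = c0 ^ n * (Amax m n w d * q ^ (n * w)) := by
    have hcu : Fintype.card (Fin n → Fin w → Fin q) = q ^ (n * w) := by
      rw [Nat.mul_comm n w]
      simp [← pow_mul]
    rw [hS]
    simp only [Finset.card_filter]
    rw [Finset.sum_comm]
    simp only [← Finset.card_filter]
    rw [Finset.sum_congr rfl (fun p hp => htrans p (Finset.mem_product.mp hp).1)]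
    rw [Finset.sum_const, smul_eq_mul, Finset.card_product, hCcard', Finset.card_univ, hcu]
    ring
  set ι2 : Fin n × Fin w ≃ Fin (n * w) := finProdFinEquiv with hι2
  set unc : (Fin n → Fin w → Fin q) → (Fin (n * w) → Fin q) :=
    fun f i => f (ι2.symm i).1 (ι2.symm i).2 with hunc
  have huncinj : Function.Injective unc := by
    intro f f' h
    funext k b
    have := congrFun h (ι2 (k, b))
    simpa [hunc] using this
  have hact : ∀ (g : Fin n → Equiv.Perm (Fin m)) (X Y : Fin n → Fin m → ZMod 2),
      arrDist (fun k => X k ∘ ⇑(g k)) (fun k => Y k ∘ ⇑(g k)) = arrDist X Y := by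
    intro g X Y
    exact Finset.sum_congr rfl (fun k _ => hammingDist_comp_equiv (g k) (X k) (Y k))
  have harr2 : ∀ f g' : Fin n → Fin w → Fin q,
      arrDist (emb f) (emb g') = 2 * hammingDist (unc f) (unc g') := by
    intro f g'
    have h1 : hammingDist (unc f) (unc g') = ∑ k, hammingDist (f k) (g' k) := by
      rw [← hammingDist_comp_equiv ι2 (unc f) (unc g')]
      have e1 : (unc f ∘ ⇑ι2) = fun p : Fin n × Fin w => f p.1 p.2 := by
        funext p
        simp [hunc]
      have e2 : (unc g' ∘ ⇑ι2) = fun p : Fin n × Fin w => g' p.1 p.2 := by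
        funext p
        simp [hunc]
      rw [e1, e2, hammingDist_prod_sum']
    rw [h1]
    calc arrDist (emb f) (emb g') = ∑ k, 2 * hammingDist (f k) (g' k) :=
        Finset.sum_congr rfl (fun k _ => hembd f g' k)
      _ = 2 * ∑ k, hammingDist (f k) (g' k) := by rw [Finset.mul_sum]
  have hterm : ∀ g : Fin n → Equiv.Perm (Fin m),
      ((C ×ˢ (univ : Finset (Fin n → Fin w → Fin q))).filter
        fun p => (fun k => p.1 k ∘ ⇑(g k)) = emb p.2).card ≤ Cmax q (n * w) d := by
    intro g
    set F := (C ×ˢ (univ : Finset (Fin n → Fin w → Fin q))).filter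
        (fun p => (fun k => p.1 k ∘ ⇑(g k)) = emb p.2) with hF
    rcases Finset.eq_empty_or_nonempty F with hFe | hFne
    · rw [hFe]
      simp
    have hinj : Set.InjOn (fun p : ((Fin n → Fin m → ZMod 2) × (Fin n → Fin w → Fin q)) =>
        unc p.2) F := by
      intro p hp p' hp' h
      have h2 : p.2 = p'.2 := huncinj h
      have hp1 := (Finset.mem_filter.mp hp).2
      have hp1' := (Finset.mem_filter.mp hp').2
      have h1 : p.1 = p'.1 := by
        funext k a
        have hcc : p.1 k ∘ ⇑(g k) = p'.1 k ∘ ⇑(g k) := by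
          rw [congrFun hp1 k, congrFun hp1' k, h2]
        have := congrFun hcc ((g k)⁻¹ a)
        simpa using this
      exact Prod.ext h1 h2
    rw [← Finset.card_image_of_injOn hinj]
    apply le_csSup (cmax_bddAbove q (n * w) d)
    refine ⟨F.image (fun p => unc p.2), hFne.image _, ?_, rfl⟩
    intro x hx y hy hxy
    obtain ⟨p, hp, rfl⟩ := Finset.mem_image.mp hx
    obtain ⟨p', hp', rfl⟩ := Finset.mem_image.mp hy
    have hp1 := (Finset.mem_filter.mp hp).2
    have hp1' := (Finset.mem_filter.mp hp').2
    have hpmem := (Finset.mem_product.mp (Finset.mem_filter.mp hp).1).1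
    have hpmem' := (Finset.mem_product.mp (Finset.mem_filter.mp hp').1).1
    have hne2 : p.2 ≠ p'.2 := fun hcc => hxy (by rw [hcc])
    have hne1 : p.1 ≠ p'.1 := by
      intro hcc
      apply hne2
      apply hembinj
      rw [← hp1, ← hp1', hcc]
    have hdist : 2 * d ≤ arrDist p.1 p'.1 := hCd p.1 hpmem p'.1 hpmem' hne1
    rw [← hact g p.1 p'.1] at hdist
    have hrw : arrDist (fun k => p.1 k ∘ ⇑(g k)) (fun k => p'.1 k ∘ ⇑(g k))
        = arrDist (emb p.2) (emb p'.2) := by rw [hp1, hp1']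
    rw [hrw, harr2 p.2 p'.2] at hdist
    show d ≤ hammingDist (unc p.2) (unc p'.2)
    exact Nat.le_of_mul_le_mul_left hdist (by norm_num)
  have hS2 : S ≤ (c0 * Nat.choose m w) ^ n * Cmax q (n * w) d := by
    have hcard : Fintype.card (Fin n → Equiv.Perm (Fin m))
        = (c0 * Nat.choose m w) ^ n := by
      rw [Fintype.card_fun]
      rw [card_perm_eq u0, hu0w, ← hc0]
      simp
    calc S ≤ ∑ _g : Fin n → Equiv.Perm (Fin m), Cmax q (n * w) d := by
            rw [hS]
            exact Finset.sum_le_sum (fun g _ => hterm g)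
      _ = Fintype.card (Fin n → Equiv.Perm (Fin m)) * Cmax q (n * w) d := by
            rw [Finset.sum_const, smul_eq_mul, Finset.card_univ]
      _ = (c0 * Nat.choose m w) ^ n * Cmax q (n * w) d := by rw [hcard]
  rw [hS1] at hS2
  have key : c0 ^ n * (q ^ (n * w) * Amax m n w d)
      ≤ c0 ^ n * (Nat.choose m w ^ n * Cmax q (n * w) d) := by
    calc c0 ^ n * (q ^ (n * w) * Amax m n w d)
        = c0 ^ n * (Amax m n w d * q ^ (n * w)) := by ring
      _ ≤ (c0 * Nat.choose m w) ^ n * Cmax q (n * w) d := hS2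
      _ = c0 ^ n * (Nat.choose m w ^ n * Cmax q (n * w) d) := by
          rw [mul_pow]
          ring
  exact Nat.le_of_mul_le_mul_left key (pow_pos hc0pos n)

theorem bassalygo_elias_CWAC_special (m n w d : ℕ) (hw : 1 ≤ w) (hwm : w ∣ m) :
    ((Nat.choose m w) ^ n * Bmax (m * n) (n * w) d
        ≤ Nat.choose (m * n) (n * w) * Amax m n w d) ∧
    ((m / w) ^ (n * w) * Amax m n w d
        ≤ (Nat.choose m w) ^ n * Cmax (m / w) (n * w) d) := by
  exact ⟨ineq1 m n w d, ineq2 m n w d hw hwm⟩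
end

section
/- Let m, n, w, d be natural numbers with 1 ≤ w ≤ m−1 and n ≥ 1, and let 𝒞 ⊆ J(m,w)^n be a constant-weight array code in which any two distinct words have Hamming distance at least 2d. Then there exists an injective map f from 𝒞 into EuclideanSpace ℝ (Fin m × Fin n) such that: (i) ‖f(X)‖ = 1 for every X ∈ 𝒞; (ii) for every X ∈ 𝒞 and every column index k ∈ Fin n, the sum over j ∈ Fin m of the (j,k)-coordinate of f(X) equals 0; and (iii) for all distinct X, Y ∈ 𝒞, the inner product ⟪f(X), f(Y)⟫ ≤ 1 − (d·m)/(n·w·(m−w)). Explicitly, one may take f(X) = (Ω(X) − c)/r, where Ω replaces each binary entry 0 of X by the real number 1 and each entry 1 by −1, c is the constant vector with all m·n coordinates equal to (m−2w)/m, and r = 2·√(n·w·(m−w)/m). -/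
open Finset

lemma sum_ite_count {m : ℕ} (P : Fin m → Prop) [DecidablePred P] (A B : ℝ) :
    ∑ j, (if P j then A else B)
      = ((univ.filter P).card : ℝ) * A + ((univ.filter fun j => ¬ P j).card : ℝ) * B := by
  rw [Finset.sum_ite, Finset.sum_const, Finset.sum_const, nsmul_eq_mul, nsmul_eq_mul]

lemma col_sum (m w : ℕ) (hwm : w ≤ m) (x : Fin m → ZMod 2) (hx : hammingNorm x = w) :
    ∑ j, (if x j = 0 then (1:ℝ) else -1) = (m:ℝ) - 2*w := by
  have h1 : (univ.filter fun j => ¬ x j = 0).card = w := hx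
  have h0 : (univ.filter fun j => x j = 0).card = m - w := by
    have := Finset.card_filter_add_card_filter_not
      (s := (univ : Finset (Fin m))) (p := fun j => x j = 0)
    simp only [Finset.card_univ, Fintype.card_fin] at this
    omega
  rw [sum_ite_count, h0, h1, Nat.cast_sub hwm]
  ring

lemma col_key (m w : ℕ) (hm : 0 < m) (hwm : w ≤ m) (x y : Fin m → ZMod 2)
    (hx : hammingNorm x = w) (hy : hammingNorm y = w) :
    ∑ j, ((if x j = 0 then (1:ℝ) else -1) - ((m:ℝ) - 2*w)/m) *
         ((if y j = 0 then (1:ℝ) else -1) - ((m:ℝ) - 2*w)/m)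
      = 4*(w:ℝ)*((m:ℝ)-w)/m - 2*hammingDist x y := by
  have hM : (0:ℝ) < m := by exact_mod_cast hm
  set c : ℝ := ((m:ℝ) - 2*w)/m with hc
  have hprod : ∀ j, (if x j = 0 then (1:ℝ) else -1) * (if y j = 0 then (1:ℝ) else -1)
      = if x j = y j then (1:ℝ) else -1 := by
    intro j
    have h2 : ∀ a : ZMod 2, a = 0 ∨ a = 1 := by decide
    rcases h2 (x j) with h | h <;> rcases h2 (y j) with h' | h' <;> simp [h, h']
  have expand : ∀ j ∈ univ,
      ((if x j = 0 then (1:ℝ) else -1) - c) * ((if y j = 0 then (1:ℝ) else -1) - c)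
        = (if x j = y j then (1:ℝ) else -1)
          - c * (if x j = 0 then (1:ℝ) else -1) - c * (if y j = 0 then (1:ℝ) else -1)
          + c^2 := by
    intro j _
    rw [← hprod j]; ring
  rw [Finset.sum_congr rfl expand]
  have hD : hammingDist x y ≤ m := by
    simpa using (hammingDist_le_card_fintype (x := x) (y := y))
  have hxy : ∑ j, (if x j = y j then (1:ℝ) else -1) = (m:ℝ) - 2*hammingDist x y := by
    have h1 : (univ.filter fun j => ¬ x j = y j).card = hammingDist x y := rfl
    have h0 : (univ.filter fun j => x j = y j).card = m - hammingDist x y := by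
      have := Finset.card_filter_add_card_filter_not
        (s := (univ : Finset (Fin m))) (p := fun j => x j = y j)
      simp only [Finset.card_univ, Fintype.card_fin] at this
      omega
    rw [sum_ite_count, h0, h1, Nat.cast_sub hD]
    ring
  rw [Finset.sum_add_distrib, Finset.sum_sub_distrib, Finset.sum_sub_distrib,
    ← Finset.mul_sum, ← Finset.mul_sum, hxy, col_sum m w hwm x hx, col_sum m w hwm y hy,
    Finset.sum_const, Finset.card_univ, Fintype.card_fin, nsmul_eq_mul, hc]
  field_simp
  ring

theorem CWAC_to_spherical_code (m n w d : ℕ) (hw : 1 ≤ w) (hwm : w < m) (hn : 1 ≤ n)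
    (C : Finset (Fin n → Fin m → ZMod 2))
    (hCw : ∀ X ∈ C, ∀ k, hammingNorm (X k) = w)
    (hCd : ∀ X ∈ C, ∀ Y ∈ C, X ≠ Y → 2 * d ≤ arrDist X Y) :
    ∃ f : (Fin n → Fin m → ZMod 2) → EuclideanSpace ℝ (Fin m × Fin n),
      (∀ X ∈ C, ∀ Y ∈ C, f X = f Y → X = Y) ∧
      (∀ X ∈ C, ‖f X‖ = 1) ∧
      (∀ X ∈ C, ∀ k : Fin n, ∑ j : Fin m, f X (j, k) = 0) ∧
      (∀ X ∈ C, ∀ Y ∈ C, X ≠ Y →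
        (inner ℝ (f X) (f Y) : ℝ) ≤ 1 - ((d : ℝ) * m) / ((n : ℝ) * w * ((m : ℝ) - w))) ∧
      (∀ X, ∀ p : Fin m × Fin n,
        f X p = ((if X p.2 p.1 = 0 then (1 : ℝ) else -1) - ((m : ℝ) - 2 * w) / m) /
          (2 * Real.sqrt ((n : ℝ) * w * ((m : ℝ) - w) / m))) := by
  classical
  have hm1 : 0 < m := lt_of_le_of_lt (Nat.zero_le w) hwm
  have hM : (0:ℝ) < m := by exact_mod_cast hm1
  have hW : (0:ℝ) < w := by exact_mod_cast hw
  have hN : (0:ℝ) < n := by exact_mod_cast hn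
  have hMW : (0:ℝ) < (m:ℝ) - w := by
    have : (w:ℝ) < m := by exact_mod_cast hwm
    linarith
  have hs : (0:ℝ) < (n:ℝ)*w*((m:ℝ)-w)/m := by positivity
  set s : ℝ := (n:ℝ)*w*((m:ℝ)-w)/m with hs_def
  set r : ℝ := 2 * Real.sqrt s with hr_def
  have hrpos : (0:ℝ) < r := by
    have := Real.sqrt_pos.2 hs
    positivity
  have hr2 : r^2 = 4 * s := by
    rw [hr_def, mul_pow, Real.sq_sqrt hs.le]; ring
  set c : ℝ := ((m:ℝ) - 2*w)/m with hc
  set f : (Fin n → Fin m → ZMod 2) → EuclideanSpace ℝ (Fin m × Fin n) :=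
    fun X => WithLp.toLp 2 (fun p : Fin m × Fin n => ((if X p.2 p.1 = 0 then (1:ℝ) else -1) - c) / r) with hf
  refine ⟨f, ?_, ?_, ?_, ?_, ?_⟩
  · -- injectivity
    intro X _ Y _ h
    funext k j
    have h1 := congrArg (fun v : EuclideanSpace ℝ (Fin m × Fin n) => v (j, k)) h
    simp only [hf, WithLp.ofLp_toLp] at h1
    have h2 : (if X k j = 0 then (1:ℝ) else -1) = (if Y k j = 0 then (1:ℝ) else -1) := by
      field_simp at h1
      linarith
    have hz : ∀ a : ZMod 2, a ≠ 0 → a = 1 := by decide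
    by_cases hX0 : X k j = 0 <;> by_cases hY0 : Y k j = 0
    · rw [hX0, hY0]
    · norm_num [hX0, hY0] at h2
    · norm_num [hX0, hY0] at h2
    · rw [hz _ hX0, hz _ hY0]
  · -- norm 1
    intro X hX
    have key : ∑ p : Fin m × Fin n,
        (((if X p.2 p.1 = 0 then (1:ℝ) else -1) - c) / r)^2 = 1 := by
      rw [Fintype.sum_prod_type, Finset.sum_comm]
      have hcol : ∀ k ∈ univ, ∑ j : Fin m,
          (((if X k j = 0 then (1:ℝ) else -1) - c) / r)^2
            = (4*(w:ℝ)*((m:ℝ)-w)/m) / r^2 := by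
        intro k _
        have hxk := hCw X hX k
        have := col_key m w hm1 hwm.le (X k) (X k) hxk hxk
        rw [hammingDist_self] at this
        calc ∑ j : Fin m, (((if X k j = 0 then (1:ℝ) else -1) - c) / r)^2
            = (∑ j : Fin m, ((if X k j = 0 then (1:ℝ) else -1) - c) *
                ((if X k j = 0 then (1:ℝ) else -1) - c)) / r^2 := by
              rw [Finset.sum_div]
              refine Finset.sum_congr rfl fun j _ => ?_
              rw [div_pow, sq]
          _ = (4*(w:ℝ)*((m:ℝ)-w)/m) / r^2 := by rw [this]; push_cast; ring_nf
      rw [Finset.sum_congr rfl hcol, Finset.sum_const, Finset.card_univ, Fintype.card_fin,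
        nsmul_eq_mul, hr2, hs_def]
      field_simp
    rw [EuclideanSpace.norm_eq]
    simp only [Real.norm_eq_abs, sq_abs]
    rw [key, Real.sqrt_one]
  · -- column sums zero
    intro X hX k
    have := col_sum m w hwm.le (X k) (hCw X hX k)
    simp only [hf, WithLp.ofLp_toLp]
    rw [← Finset.sum_div, Finset.sum_sub_distrib, this, Finset.sum_const,
      Finset.card_univ, Fintype.card_fin, nsmul_eq_mul, hc]
    field_simp
    ring
  · -- inner product bound
    intro X hX Y hY hXY
    have hD := hCd X hX Y hY hXY
    have hinner : (inner ℝ (f X) (f Y) : ℝ) = 1 - (arrDist X Y : ℝ) / (2 * s) := by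
      rw [hf]
      rw [PiLp.inner_apply]
      simp only [RCLike.inner_apply, conj_trivial]
      rw [Fintype.sum_prod_type, Finset.sum_comm]
      simp only [mul_comm (((if Y _ _ = 0 then (1:ℝ) else -1) - c) / r)]
      have hcol : ∀ k ∈ univ, ∑ j : Fin m,
          (((if X k j = 0 then (1:ℝ) else -1) - c) / r) *
          (((if Y k j = 0 then (1:ℝ) else -1) - c) / r)
            = (4*(w:ℝ)*((m:ℝ)-w)/m - 2*hammingDist (X k) (Y k)) / r^2 := by
        intro k _
        rw [← col_key m w hm1 hwm.le (X k) (Y k) (hCw X hX k) (hCw Y hY k),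
          Finset.sum_div]
        refine Finset.sum_congr rfl fun j _ => ?_
        rw [sq, div_mul_div_comm]
      rw [Finset.sum_congr rfl hcol, ← Finset.sum_div, Finset.sum_sub_distrib,
        Finset.sum_const, Finset.card_univ, Fintype.card_fin, nsmul_eq_mul]
      have harr : ∑ k : Fin n, (2:ℝ) * (hammingDist (X k) (Y k) : ℝ)
          = 2 * (arrDist X Y : ℝ) := by
        rw [← Finset.mul_sum, arrDist]
        push_cast
        ring
      rw [harr, hr2, hs_def]
      have hs' : (0:ℝ) < (n:ℝ)*w*((m:ℝ)-w) := by positivity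
      field_simp
      ring
    rw [hinner]
    have hcast : (2*d : ℝ) ≤ (arrDist X Y : ℝ) := by exact_mod_cast hD
    have heq : ((d : ℝ) * m) / ((n : ℝ) * w * ((m : ℝ) - w)) = (2*d) / (2 * s) := by
      rw [hs_def]
      field_simp
    rw [heq]
    have h2s : (0:ℝ) < 2 * s := by linarith
    have hle : (2*(d:ℝ))/(2*s) ≤ (arrDist X Y : ℝ)/(2*s) := by gcongr
    push_cast at hle ⊢
    linarith
  · intro X p
    rfl
end
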